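/- Suppose A ⊂ ℤ² contains at least one nearest neighbor of the origin. Then for all n ≥ 1, Es_n(A ∖ {0}) ≤ 4 · Es_n(A). -/

import Mathlib

open MeasureTheory ProbabilityTheory Filter Set
open scoped ENNReal

noncomputable section

/-- A lattice point viewed as a complex number. -/
def toC (x : ℤ × ℤ) : ℂ := (x.1 : ℂ) + (x.2 : ℂ) * Complex.I

/-- The Euclidean norm of a lattice point. -/
def latNorm (x : ℤ × ℤ) : ℝ := ‖toC x‖

/-- The discrete ball `C_m = {x ∈ ℤ² : |x| < m}`. -/
def discBall (m : ℝ) : Set (ℤ × ℤ) := {x | latNorm x < m}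

/-- The outer boundary `∂C_m = {x ∉ C_m : ∃ y ∈ C_m, |y - x| = 1}`. -/
def discBdry (m : ℝ) : Set (ℤ × ℤ) :=
  {x | x ∉ discBall m ∧ ∃ y ∈ discBall m, latNorm (y - x) = 1}

/-- The four unit lattice vectors. -/
def steps : Finset (ℤ × ℤ) := {(1, 0), (-1, 0), (0, 1), (0, -1)}

/-- The uniform distribution on the four unit lattice vectors. -/
def stepPMF : PMF (ℤ × ℤ) := PMF.uniformOfFinset steps ⟨(1, 0), by decide⟩

/-- `S` is a simple random walk on `ℤ²` under `P`, started at `x`: the increments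
`S (k+1) - S k` are independent and uniformly distributed on the four unit vectors. -/
def IsRWFrom {Ω : Type*} [MeasurableSpace Ω] (P : Measure Ω) (S : ℕ → Ω → ℤ × ℤ)
    (x : ℤ × ℤ) : Prop :=
  IsProbabilityMeasure P ∧ (∀ ω, S 0 ω = x) ∧ (∀ k, Measurable (S k)) ∧
    iIndepFun (fun k ω => S (k + 1) ω - S k ω) P ∧
    ∀ k, P.map (fun ω => S (k + 1) ω - S k ω) = stepPMF.toMeasure

/-- `S` is a simple random walk started at the origin. -/
def IsSRW {Ω : Type*} [MeasurableSpace Ω] (P : Measure Ω) (S : ℕ → Ω → ℤ × ℤ) : Prop :=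
  IsRWFrom P S 0

/-- `σ_m`, the first time the process is in `∂C_m` (with junk value `0` if there
is no such time). -/
def exitTime {Ω : Type*} (S : ℕ → Ω → ℤ × ℤ) (m : ℝ) (ω : Ω) : ℕ :=
  sInf {k | S k ω ∈ discBdry m}

/-- The path `[S 0, S 1, …, S j]` as a list. -/
def pathList {Ω : Type*} (S : ℕ → Ω → ℤ × ℤ) (j : ℕ) (ω : Ω) : List (ℤ × ℤ) :=
  (List.range (j + 1)).map fun i => S i ω

/-- The escape probability `Es_n(A)`: the probability that the walk reaches `∂C_n` without
hitting `A` at any positive time up to `σ_n`. -/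
def escProb {Ω : Type*} [MeasurableSpace Ω] (P : Measure Ω) (S : ℕ → Ω → ℤ × ℤ)
    (n : ℝ) (A : Set (ℤ × ℤ)) : ℝ≥0∞ :=
  P {ω | ∀ k, 1 ≤ k → k ≤ exitTime S n ω → S k ω ∉ A}

namespace Esc


lemma latNorm_eq (x : ℤ × ℤ) : latNorm x = Real.sqrt ((x.1 : ℝ)^2 + (x.2 : ℝ)^2) := by
  rw [latNorm, Complex.norm_def, Complex.normSq_apply]
  simp [toC]
  ring_nf

lemma latNorm_zero : latNorm 0 = 0 := by simp [latNorm_eq]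

lemma mem_steps_of_latNorm_one {a : ℤ × ℤ} (h : latNorm a = 1) : a ∈ steps := by
  rw [latNorm_eq] at h
  have h2 : ((a.1 : ℝ))^2 + (a.2 : ℝ)^2 = 1 := by
    rwa [Real.sqrt_eq_one] at h
  have h3 : a.1^2 + a.2^2 = 1 := by exact_mod_cast h2
  obtain ⟨p, q⟩ := a
  simp only at h3
  have hp : p^2 ≤ 1 := by nlinarith [sq_nonneg q]
  have hq : q^2 ≤ 1 := by nlinarith [sq_nonneg p]
  have hp1 : -1 ≤ p := by nlinarith
  have hp2 : p ≤ 1 := by nlinarith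
  have hq1 : -1 ≤ q := by nlinarith
  have hq2 : q ≤ 1 := by nlinarith
  interval_cases p <;> interval_cases q <;> simp_all [steps] <;> omega

lemma latNorm_one_ne_zero {a : ℤ × ℤ} (h : latNorm a = 1) : a ≠ 0 := by
  intro h0; rw [h0, latNorm_zero] at h; norm_num at h

lemma zero_not_mem_discBdry {r : ℝ} (hr : 1 ≤ r) : (0 : ℤ × ℤ) ∉ discBdry r := by
  intro h
  exact h.1 (by simp [discBall, latNorm_zero]; linarith)

/-- step weight -/
def p (c : ℤ × ℤ) : ℝ≥0∞ := if c ∈ steps then 4⁻¹ else 0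

/-- weight of a word -/
def rho (w : List (ℤ × ℤ)) : ℝ≥0∞ := (w.map p).prod

lemma rho_nil : rho [] = 1 := by simp [rho]

lemma rho_append (h t : List (ℤ × ℤ)) : rho (h ++ t) = rho h * rho t := by
  simp [rho]

lemma rho_eq_prod_range (w : List (ℤ × ℤ)) :
    rho w = ∏ i ∈ Finset.range w.length, p (w.getD i 0) := by
  induction w with
  | nil => simp [rho]
  | cons c w ih =>
      rw [rho, List.map_cons, List.prod_cons, ← rho]
      rw [List.length_cons, Finset.prod_range_succ']
      simp [ih, mul_comm]

/-- position after `i` steps -/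
def psum (w : List (ℤ × ℤ)) (i : ℕ) : ℤ × ℤ := (w.take i).sum

lemma psum_zero (w : List (ℤ × ℤ)) : psum w 0 = 0 := by simp [psum]

lemma psum_succ {w : List (ℤ × ℤ)} {i : ℕ} (h : i < w.length) :
    psum w (i + 1) = psum w i + w.getD i 0 := by
  rw [psum, List.take_succ, List.sum_append, List.getElem?_eq_getElem h]
  simp [psum, List.getD, List.getElem?_eq_getElem h]

lemma psum_take {w : List (ℤ × ℤ)} {i k : ℕ} (h : i ≤ k) :
    psum (w.take k) i = psum w i := by
  simp [psum, List.take_take, Nat.min_eq_left h]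

lemma psum_append_left {h t : List (ℤ × ℤ)} {i : ℕ} (hi : i ≤ h.length) :
    psum (h ++ t) i = psum h i := by
  rw [psum, List.take_append_of_le_length hi, psum]

lemma psum_append_right (h t : List (ℤ × ℤ)) (i : ℕ) :
    psum (h ++ t) (h.length + i) = psum h h.length + psum t i := by
  rw [psum, List.take_add, List.sum_append, List.take_left, List.drop_left]
  simp [psum]


/-- total weight of a set of words -/
def wt (W : Set (List (ℤ × ℤ))) : ℝ≥0∞ := ∑' w : List (ℤ × ℤ), W.indicator rho w

lemma wt_eq_tsum_subtype (W : Set (List (ℤ × ℤ))) : wt W = ∑' w : ↥W, rho ↑w :=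
  (tsum_subtype W rho).symm

lemma wt_mono {W V : Set (List (ℤ × ℤ))} (h : W ⊆ V) : wt W ≤ wt V :=
  ENNReal.tsum_le_tsum fun w => Set.indicator_le_indicator_of_subset h (fun _ => zero_le) w

lemma wt_union_le (W V : Set (List (ℤ × ℤ))) : wt (W ∪ V) ≤ wt W + wt V := by
  rw [wt, wt, wt, ← ENNReal.tsum_add]
  refine ENNReal.tsum_le_tsum fun w => ?_
  by_cases hw : w ∈ W
  · calc (W ∪ V).indicator rho w ≤ rho w := Set.indicator_le_self _ _ w
      _ ≤ _ := by rw [Set.indicator_of_mem hw]; exact le_self_add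
  by_cases hv : w ∈ V
  · calc (W ∪ V).indicator rho w ≤ rho w := Set.indicator_le_self _ _ w
      _ ≤ _ := by rw [Set.indicator_of_mem hv]; exact le_add_self
  · rw [Set.indicator_of_notMem (by simp [hw, hv])]; exact zero_le

/-- words whose partial sums exit at the end, avoiding `B` at positive times -/
def EW (r : ℝ) (B : Set (ℤ × ℤ)) : Set (List (ℤ × ℤ)) :=
  {w | (∀ i < w.length, psum w i ∉ discBdry r) ∧ psum w w.length ∈ discBdry r ∧
       ∀ i, 1 ≤ i → i ≤ w.length → psum w i ∉ B}

lemma EW_mono {r : ℝ} {B B' : Set (ℤ × ℤ)} (h : B ⊆ B') : EW r B' ⊆ EW r B :=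
  fun w hw => ⟨hw.1, hw.2.1, fun i h1 h2 hm => hw.2.2 i h1 h2 (h hm)⟩

/-- loops at the origin staying off the boundary, avoiding `B` at positive times -/
def Loops (r : ℝ) (B : Set (ℤ × ℤ)) : Set (List (ℤ × ℤ)) :=
  {h | h ≠ [] ∧ psum h h.length = 0 ∧ (∀ i ≤ h.length, psum h i ∉ discBdry r) ∧
       ∀ i, 1 ≤ i → i ≤ h.length → psum h i ∉ B}

/-- excursions: loops that do not return to the origin in the interior -/
def Exc (r : ℝ) (B : Set (ℤ × ℤ)) : Set (List (ℤ × ℤ)) :=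
  {e | e ∈ Loops r B ∧ ∀ i, 0 < i → i < e.length → psum e i ≠ 0}

/-- exit words that visit the origin at a positive time -/
def EWvisit (r : ℝ) (B : Set (ℤ × ℤ)) : Set (List (ℤ × ℤ)) :=
  {w | w ∈ EW r B ∧ ∃ i, 1 ≤ i ∧ i ≤ w.length ∧ psum w i = 0}

lemma EW_split (r : ℝ) (B : Set (ℤ × ℤ)) :
    EW r B ⊆ EW r (B ∪ {0}) ∪ EWvisit r B := by
  intro w hw
  by_cases hv : ∃ i, 1 ≤ i ∧ i ≤ w.length ∧ psum w i = 0
  · exact Or.inr ⟨hw, hv⟩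
  · push_neg at hv
    refine Or.inl ⟨hw.1, hw.2.1, fun i h1 h2 hm => ?_⟩
    rcases hm with hm | hm
    · exact hw.2.2 i h1 h2 hm
    · exact hv i h1 h2 hm

/-- decomposition of an exit word visiting the origin, at its last visit -/
lemma EWvisit_decomp {r : ℝ} (hr : 1 ≤ r) {B : Set (ℤ × ℤ)} {w : List (ℤ × ℤ)}
    (hw : w ∈ EWvisit r B) :
    ∃ L, 1 ≤ L ∧ L < w.length ∧
      w.take L ∈ Loops r B ∧ w.drop L ∈ EW r (B ∪ {0}) ∧ w.take L ++ w.drop L = w := by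
  obtain ⟨⟨hbd, hend, hav⟩, i0, hi1, hi2, hi0⟩ := hw
  set L := Nat.findGreatest (fun i => psum w i = 0 ∧ 1 ≤ i) w.length with hL
  have hLspec : psum w L = 0 ∧ 1 ≤ L :=
    Nat.findGreatest_spec (P := fun i => psum w i = 0 ∧ 1 ≤ i) (m := i0) hi2 ⟨hi0, hi1⟩
  have hLle : L ≤ w.length := Nat.findGreatest_le _
  have hLmax : ∀ j, L < j → j ≤ w.length → psum w j ≠ 0 := by
    intro j hj hjle hj0
    have h1j : 1 ≤ j := le_trans hLspec.2 (le_of_lt hj)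
    exact Nat.not_lt.2 (Nat.le_findGreatest (P := fun i => psum w i = 0 ∧ 1 ≤ i) hjle ⟨hj0, h1j⟩) hj
  have hLlt : L < w.length := by
    rcases lt_or_eq_of_le hLle with h | h
    · exact h
    · exfalso
      rw [← h, hLspec.1] at hend
      exact zero_not_mem_discBdry hr hend
  have hlentake : (w.take L).length = L := by rw [List.length_take]; omega
  have hps : ∀ i, psum (w.drop L) i = psum w (L + i) := by
    intro i
    have h2 := psum_append_right (w.take L) (w.drop L) i
    rw [List.take_append_drop, hlentake, psum_take (le_refl L), hLspec.1, zero_add] at h2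
    exact h2.symm
  have hlendrop : (w.drop L).length = w.length - L := List.length_drop
  refine ⟨L, hLspec.2, hLlt, ⟨?_, ?_, ?_, ?_⟩, ⟨?_, ?_, ?_⟩, List.take_append_drop L w⟩
  · intro hnil
    have := congrArg List.length hnil
    rw [hlentake] at this; simp at this; omega
  · rw [hlentake, psum_take (le_refl L)]; exact hLspec.1
  · intro i hi
    rw [hlentake] at hi
    rw [psum_take hi]
    exact hbd i (lt_of_le_of_lt hi hLlt)
  · intro i h1 h2
    rw [hlentake] at h2
    rw [psum_take h2]
    exact hav i h1 (le_trans h2 hLle)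
  · intro i hi
    rw [hlendrop] at hi
    rw [hps i]
    exact hbd (L + i) (by omega)
  · rw [hlendrop, hps _]
    have : L + (w.length - L) = w.length := by omega
    rw [this]; exact hend
  · intro i h1 h2
    rw [hlendrop] at h2
    rw [hps i]
    rintro (hm | hm)
    · exact hav (L + i) (by omega) (by omega) hm
    · simp only [Set.mem_singleton_iff] at hm
      rcases lt_or_eq_of_le h2 with h | h
      · exact hLmax (L + i) (by omega) (by omega) hm
      · have hLi : L + i = w.length := by omega
        refine zero_not_mem_discBdry hr ?_
        rw [← hm, hLi]
        exact hend

/-- decomposition of a loop into its first excursion and the remaining loop -/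
lemma Loops_decomp {r : ℝ} {B : Set (ℤ × ℤ)} {h : List (ℤ × ℤ)}
    (hh : h ∈ Loops r B) :
    ∃ M, 1 ≤ M ∧ M ≤ h.length ∧ h.take M ∈ Exc r B ∧
      (h.drop M = [] ∨ h.drop M ∈ Loops r B) ∧ h.take M ++ h.drop M = h := by
  obtain ⟨hne, hend, hbd, hav⟩ := hh
  have hlen1 : 1 ≤ h.length := by
    rcases h with _ | _
    · exact absurd rfl hne
    · simp
  set M := sInf {i | 1 ≤ i ∧ psum h i = 0} with hM
  have hmemM : h.length ∈ {i | 1 ≤ i ∧ psum h i = 0} := ⟨hlen1, hend⟩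
  have hMspec : 1 ≤ M ∧ psum h M = 0 := Nat.sInf_mem ⟨_, hmemM⟩
  have hMle : M ≤ h.length := Nat.sInf_le hmemM
  have hMmin : ∀ j, 0 < j → j < M → psum h j ≠ 0 := by
    intro j hj hjM hj0
    exact Nat.notMem_of_lt_sInf hjM ⟨hj, hj0⟩
  have hlentake : (h.take M).length = M := by rw [List.length_take]; omega
  have hps : ∀ i, psum (h.drop M) i = psum h (M + i) := by
    intro i
    have h2 := psum_append_right (h.take M) (h.drop M) i
    rw [List.take_append_drop, hlentake, psum_take (le_refl M), hMspec.2, zero_add] at h2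
    exact h2.symm
  have hlendrop : (h.drop M).length = h.length - M := List.length_drop
  refine ⟨M, hMspec.1, hMle, ⟨⟨?_, ?_, ?_, ?_⟩, ?_⟩, ?_, List.take_append_drop M h⟩
  · intro hnil
    have := congrArg List.length hnil
    rw [hlentake] at this; simp at this; omega
  · rw [hlentake, psum_take (le_refl M)]; exact hMspec.2
  · intro i hi
    rw [hlentake] at hi
    rw [psum_take hi]
    exact hbd i (le_trans hi hMle)
  · intro i h1 h2
    rw [hlentake] at h2
    rw [psum_take h2]
    exact hav i h1 (le_trans h2 hMle)
  · intro i hi hilen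
    rw [hlentake] at hilen
    rw [psum_take (le_of_lt hilen)]
    exact hMmin i hi hilen
  · rcases eq_or_lt_of_le hMle with h' | h'
    · left; rw [h']; simp
    · right
      refine ⟨?_, ?_, ?_, ?_⟩
      · intro hnil
        have := congrArg List.length hnil
        rw [hlendrop] at this; simp at this; omega
      · rw [hlendrop, hps _]
        have : M + (h.length - M) = h.length := by omega
        rw [this]; exact hend
      · intro i hi
        rw [hlendrop] at hi
        rw [hps i]
        exact hbd (M + i) (by omega)
      · intro i h1 h2
        rw [hlendrop] at h2
        rw [hps i]
        exact hav (M + i) (by omega) (by omega)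




variable {Ω : Type} [MeasurableSpace Ω] {P : Measure Ω} {S : ℕ → Ω → ℤ × ℤ}

/-- the increments -/
def X (S : ℕ → Ω → ℤ × ℤ) (k : ℕ) (ω : Ω) : ℤ × ℤ := S (k + 1) ω - S k ω

/-- cylinder event: the first `w.length` increments spell out `w` -/
def cyl (S : ℕ → Ω → ℤ × ℤ) (w : List (ℤ × ℤ)) : Set Ω :=
  {ω | ∀ i < w.length, X S i ω = w.getD i 0}

lemma measurable_X (hS : IsSRW P S) (k : ℕ) : Measurable (X S k) :=
  (hS.2.2.1 (k + 1)).sub (hS.2.2.1 k)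

lemma meas_X_singleton (hS : IsSRW P S) (k : ℕ) (c : ℤ × ℤ) :
    P (X S k ⁻¹' {c}) = p c := by
  have hXm : Measurable (X S k) := measurable_X hS k
  have hmap : P.map (X S k) = stepPMF.toMeasure := hS.2.2.2.2 k
  have h1 : P (X S k ⁻¹' {c}) = stepPMF.toMeasure {c} := by
    rw [← hmap, Measure.map_apply hXm (measurableSet_singleton c)]
  rw [h1, PMF.toMeasure_apply_singleton _ _ (measurableSet_singleton c),
    stepPMF]
  erw [PMF.uniformOfFinset_apply]
  have hcard : (steps.card : ℝ≥0∞) = 4 := by norm_num [steps]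
  rw [p]
  by_cases h : c ∈ steps <;> simp [h, hcard]

lemma cyl_eq_iInter (w : List (ℤ × ℤ)) :
    cyl S w = ⋂ i ∈ Finset.range w.length, X S i ⁻¹' {w.getD i 0} := by
  ext ω
  simp [cyl, Set.mem_iInter, Finset.mem_range]

lemma measurableSet_cyl (hS : IsSRW P S) (w : List (ℤ × ℤ)) :
    MeasurableSet (cyl S w) := by
  rw [cyl_eq_iInter]
  exact MeasurableSet.biInter (Set.to_countable _)
    (fun i _ => measurable_X hS i (measurableSet_singleton _))

lemma meas_cyl (hS : IsSRW P S) (w : List (ℤ × ℤ)) : P (cyl S w) = rho w := by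
  have hind := hS.2.2.2.1
  rw [cyl_eq_iInter]
  have h := (iIndepFun_iff_measure_inter_preimage_eq_mul.1 hind) (Finset.range w.length)
    (sets := fun i => {w.getD i 0}) (fun i _ => measurableSet_singleton _)
  calc P (⋂ i ∈ Finset.range w.length, X S i ⁻¹' {w.getD i 0})
      = ∏ i ∈ Finset.range w.length, P (X S i ⁻¹' {w.getD i 0}) := h
    _ = rho w := by
        rw [rho_eq_prod_range]
        exact Finset.prod_congr rfl fun i _ => meas_X_singleton hS i _

lemma S_eq_psum (hS : IsSRW P S) {w : List (ℤ × ℤ)} {ω : Ω} (hω : ω ∈ cyl S w) :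
    ∀ i ≤ w.length, S i ω = psum w i := by
  intro i
  induction i with
  | zero => intro _; rw [psum_zero]; exact hS.2.1 ω
  | succ i ih =>
      intro hi
      have hi' : i < w.length := by omega
      have hXi : X S i ω = w.getD i 0 := hω i hi'
      have hstep : S (i + 1) ω = S i ω + X S i ω := by simp [X]
      rw [hstep, ih (by omega), hXi, psum_succ hi']

lemma psum_eq_of_mem_cyl (hS : IsSRW P S) {w w' : List (ℤ × ℤ)} {ω : Ω}
    (h1 : ω ∈ cyl S w) (h2 : ω ∈ cyl S w') {i : ℕ}
    (hi : i ≤ w.length) (hi' : i ≤ w'.length) : psum w i = psum w' i := by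
  rw [← S_eq_psum hS h1 i hi, ← S_eq_psum hS h2 i hi']

lemma eq_of_mem_cyl (hS : IsSRW P S) {w w' : List (ℤ × ℤ)} {ω : Ω}
    (h1 : ω ∈ cyl S w) (h2 : ω ∈ cyl S w') (hlen : w.length = w'.length) : w = w' := by
  apply List.ext_getElem hlen
  intro i hi hi'
  have e1 := h1 i hi
  have e2 := h2 i hi'
  rw [List.getD_eq_getElem _ _ hi] at e1
  rw [List.getD_eq_getElem _ _ hi'] at e2
  rw [← e1, ← e2]

lemma EW_disjoint (hS : IsSRW P S) {r : ℝ} {B : Set (ℤ × ℤ)} :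
    (EW r B).PairwiseDisjoint (cyl S) := by
  intro w hw w' hw' hne
  rw [Function.onFun, Set.disjoint_left]
  intro ω h1 h2
  rcases lt_trichotomy w.length w'.length with h | h | h
  · have := psum_eq_of_mem_cyl hS h1 h2 (le_refl w.length) (le_of_lt h)
    exact hw'.1 w.length h (this ▸ hw.2.1)
  · exact hne (eq_of_mem_cyl hS h1 h2 h)
  · have := psum_eq_of_mem_cyl hS h2 h1 (le_refl w'.length) (le_of_lt h)
    exact hw.1 w'.length h (this ▸ hw'.2.1)

lemma Exc_disjoint (hS : IsSRW P S) {r : ℝ} {B : Set (ℤ × ℤ)} {V : Set (List (ℤ × ℤ))}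
    (hV : V ⊆ Exc r B) : V.PairwiseDisjoint (cyl S) := by
  intro w hw w' hw' hne
  rw [Function.onFun, Set.disjoint_left]
  intro ω h1 h2
  obtain ⟨⟨hne1, hend1, _, _⟩, hint1⟩ := hV hw
  obtain ⟨⟨hne2, hend2, _, _⟩, hint2⟩ := hV hw'
  have hl1 : 0 < w.length := List.length_pos_iff.2 hne1
  have hl2 : 0 < w'.length := List.length_pos_iff.2 hne2
  rcases lt_trichotomy w.length w'.length with h | h | h
  · have := psum_eq_of_mem_cyl hS h1 h2 (le_refl w.length) (le_of_lt h)
    exact hint2 w.length hl1 h (this ▸ hend1)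
  · exact hne (eq_of_mem_cyl hS h1 h2 h)
  · have := psum_eq_of_mem_cyl hS h2 h1 (le_refl w'.length) (le_of_lt h)
    exact hint1 w'.length hl2 h (this ▸ hend2)

/-- Kraft-type bound: weight of a set of words with disjoint cylinders is at most
the measure of any event containing all the cylinders. -/
lemma wt_le_meas (hS : IsSRW P S) {W : Set (List (ℤ × ℤ))}
    (hd : W.PairwiseDisjoint (cyl S)) {E : Set Ω} (hE : MeasurableSet E)
    (hsub : ∀ w ∈ W, cyl S w ⊆ E) : wt W ≤ P E := by
  rw [wt_eq_tsum_subtype]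
  calc ∑' w : ↥W, rho ↑w = ∑' w : ↥W, P (cyl S ↑w) :=
        tsum_congr fun w => (meas_cyl hS _).symm
    _ = P (⋃ w ∈ W, cyl S w) :=
        (measure_biUnion (Set.to_countable W) hd fun w _ => measurableSet_cyl hS w).symm
    _ ≤ P E := measure_mono (Set.iUnion₂_subset hsub)


lemma exitTime_eq (hS : IsSRW P S) {r : ℝ} {B : Set (ℤ × ℤ)} {w : List (ℤ × ℤ)}
    (hw : w ∈ EW r B) {ω : Ω} (hω : ω ∈ cyl S w) : exitTime S r ω = w.length := by
  have hmem : w.length ∈ {k | S k ω ∈ discBdry r} := by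
    show S w.length ω ∈ discBdry r
    rw [S_eq_psum hS hω _ (le_refl _)]
    exact hw.2.1
  apply le_antisymm (Nat.sInf_le hmem)
  by_contra hlt
  push_neg at hlt
  have hin : S (exitTime S r ω) ω ∈ discBdry r :=
    Nat.sInf_mem (⟨_, hmem⟩ : {k | S k ω ∈ discBdry r}.Nonempty)
  have heq : S (exitTime S r ω) ω = psum w (exitTime S r ω) :=
    S_eq_psum hS hω _ (le_of_lt hlt)
  rw [heq] at hin
  exact hw.1 _ hlt hin

lemma escProb_eq (hS : IsSRW P S) {r : ℝ} (hr : 1 ≤ r) (B : Set (ℤ × ℤ)) :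
    escProb P S r B = P {ω | ∀ k, S k ω ∉ discBdry r} + wt (EW r B) := by
  set N : Set Ω := {ω | ∀ k, S k ω ∉ discBdry r} with hN
  have hGeq : {ω | ∀ k, 1 ≤ k → k ≤ exitTime S r ω → S k ω ∉ B}
      = N ∪ ⋃ w ∈ EW r B, cyl S w := by
    ext ω
    constructor
    · intro hG
      by_cases hNmem : ω ∈ N
      · exact Or.inl hNmem
      · right
        simp only [hN, Set.mem_setOf_eq, not_forall, not_not] at hNmem
        obtain ⟨k0, hk0⟩ := hNmem
        have hne : {k | S k ω ∈ discBdry r}.Nonempty := ⟨k0, hk0⟩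
        set T := exitTime S r ω with hT
        have hTmem : S T ω ∈ discBdry r := Nat.sInf_mem hne
        have hTpos : 1 ≤ T := by
          rcases Nat.eq_zero_or_pos T with h | h
          · exfalso
            rw [h] at hTmem
            rw [hS.2.1 ω] at hTmem
            exact zero_not_mem_discBdry hr hTmem
          · exact h
        set w : List (ℤ × ℤ) := (List.range T).map (fun i => X S i ω) with hw
        have hlen : w.length = T := by simp [hw]
        have hcyl : ω ∈ cyl S w := by
          intro i hi
          rw [hlen] at hi
          rw [hw, List.getD_eq_getElem _ _ (by simpa [hw, hlen] using hi)]
          simp [hi]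
        have hSp : ∀ i ≤ T, S i ω = psum w i := by
          intro i hi; exact S_eq_psum hS hcyl i (by omega)
        refine Set.mem_biUnion (⟨?_, ?_, ?_⟩ : w ∈ EW r B) hcyl
        · intro i hi
          rw [hlen] at hi
          rw [← hSp i (le_of_lt hi)]
          exact Nat.notMem_of_lt_sInf hi
        · rw [hlen, ← hSp T (le_refl T)]
          exact hTmem
        · intro i h1 h2
          rw [hlen] at h2
          rw [← hSp i h2]
          exact hG i h1 h2
    · rintro (hNmem | hU)
      · intro k h1 h2
        exfalso
        have : {k | S k ω ∈ discBdry r} = ∅ := by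
          ext j; simp only [Set.mem_setOf_eq, Set.mem_empty_iff_false, iff_false]
          exact hNmem j
        rw [exitTime, this, Nat.sInf_empty] at h2
        omega
      · obtain ⟨w, hwEW, hωw⟩ := Set.mem_iUnion₂.1 hU
        intro k h1 h2
        rw [exitTime_eq hS hwEW hωw] at h2
        rw [S_eq_psum hS hωw k h2]
        exact hwEW.2.2 k h1 h2
  rw [escProb, hGeq]
  have hdisj : Disjoint N (⋃ w ∈ EW r B, cyl S w) := by
    rw [Set.disjoint_left]
    intro ω hNmem hU
    obtain ⟨w, hwEW, hωw⟩ := Set.mem_iUnion₂.1 hU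
    apply hNmem w.length
    rw [S_eq_psum hS hωw _ (le_refl _)]
    exact hwEW.2.1
  have hUm : MeasurableSet (⋃ w ∈ EW r B, cyl S w) :=
    MeasurableSet.biUnion (Set.to_countable _) (fun w _ => measurableSet_cyl hS w)
  rw [measure_union hdisj hUm]
  congr 1
  rw [measure_biUnion (Set.to_countable _) (EW_disjoint hS) (fun w _ => measurableSet_cyl hS w)]
  rw [wt_eq_tsum_subtype]
  exact tsum_congr fun w => meas_cyl hS _

lemma wt_rho_zero : wt {w : List (ℤ × ℤ) | rho w = 0} = 0 := by
  have h : ∀ w, ({w : List (ℤ × ℤ) | rho w = 0}).indicator rho w = 0 := by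
    intro w
    by_cases hw : w ∈ {w : List (ℤ × ℤ) | rho w = 0}
    · rw [Set.indicator_of_mem hw]; exact hw
    · rw [Set.indicator_of_notMem hw]
  simp [wt, h]

lemma wt_biUnion_le {γ : Type*} (F : Finset γ) (f : γ → Set (List (ℤ × ℤ))) :
    wt (⋃ s ∈ F, f s) ≤ ∑ s ∈ F, wt (f s) := by
  classical
  induction F using Finset.induction with
  | empty => simp [wt]
  | insert _ _ hnotmem ih =>
      rename_i a F'
      rw [Finset.set_biUnion_insert, Finset.sum_insert hnotmem]
      exact le_trans (wt_union_le _ _) (add_le_add_right ih _)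

lemma wt_Exc_first (hS : IsSRW P S) {r : ℝ} {B : Set (ℤ × ℤ)} {s : ℤ × ℤ}
    (hs : s ∈ steps) :
    wt {w | w ∈ Exc r B ∧ w.getD 0 0 = s} ≤ 4⁻¹ := by
  have hsub : {w | w ∈ Exc r B ∧ w.getD 0 0 = s} ⊆ Exc r B := fun w hw => hw.1
  have hle := wt_le_meas hS (Exc_disjoint hS hsub)
    (measurable_X hS 0 (measurableSet_singleton s)) (E := X S 0 ⁻¹' {s}) ?_
  · rw [meas_X_singleton hS 0 s, p, if_pos hs] at hle
    exact hle
  · rintro w ⟨hwE, hwh⟩ ω hω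
    have hl : 0 < w.length := List.length_pos_iff.2 hwE.1.1
    have := hω 0 hl
    rw [hwh] at this
    exact this

lemma wt_Exc_le (hS : IsSRW P S) {r : ℝ} {B : Set (ℤ × ℤ)} {a : ℤ × ℤ}
    (haB : a ∈ B) (ha : latNorm a = 1) : wt (Exc r B) ≤ 3 * 4⁻¹ := by
  classical
  have haS : a ∈ steps := mem_steps_of_latNorm_one ha
  have hcover : Exc r B ⊆ {w : List (ℤ × ℤ) | rho w = 0} ∪
      ⋃ s ∈ (steps.erase a), {w | w ∈ Exc r B ∧ w.getD 0 0 = s} := by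
    intro w hw
    have hl : 0 < w.length := List.length_pos_iff.2 hw.1.1
    set c := w.getD 0 0 with hc
    by_cases hcs : c ∈ steps
    · right
      have hps1 : psum w 1 = c := by
        rw [show (1 : ℕ) = 0 + 1 from rfl, psum_succ hl, psum_zero, zero_add]
      have hca : c ≠ a := by
        intro h
        apply hw.1.2.2.2 1 (le_refl 1) hl
        rw [hps1, h]
        exact haB
      exact Set.mem_biUnion (Finset.mem_erase.2 ⟨hca, hcs⟩) ⟨hw, rfl⟩
    · left
      have hcmem : c ∈ w := by
        rw [hc, List.getD_eq_getElem _ _ hl]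
        exact List.getElem_mem hl
      show rho w = 0
      rw [rho]
      apply List.prod_eq_zero
      rw [List.mem_map]
      exact ⟨c, hcmem, by rw [p, if_neg hcs]⟩
  calc wt (Exc r B) ≤ wt ({w : List (ℤ × ℤ) | rho w = 0} ∪
        ⋃ s ∈ (steps.erase a), {w | w ∈ Exc r B ∧ w.getD 0 0 = s}) := wt_mono hcover
    _ ≤ wt {w : List (ℤ × ℤ) | rho w = 0} +
        wt (⋃ s ∈ (steps.erase a), {w | w ∈ Exc r B ∧ w.getD 0 0 = s}) := wt_union_le _ _
    _ ≤ 0 + ∑ s ∈ steps.erase a, wt {w | w ∈ Exc r B ∧ w.getD 0 0 = s} := by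
        rw [wt_rho_zero]
        exact add_le_add_right (wt_biUnion_le _ _) 0
    _ ≤ 0 + ∑ _s ∈ steps.erase a, (4 : ℝ≥0∞)⁻¹ := by
        refine add_le_add_right (Finset.sum_le_sum fun s hsmem => ?_) 0
        exact wt_Exc_first hS (Finset.mem_of_mem_erase hsmem)
    _ = 3 * 4⁻¹ := by
        rw [zero_add, Finset.sum_const, Finset.card_erase_of_mem haS]
        norm_num [steps]

lemma sum_loops_le {r : ℝ} {B : Set (ℤ × ℤ)} (hExc : wt (Exc r B) ≤ 3 * 4⁻¹) :
    ∀ k : ℕ, ∀ F : Finset (List (ℤ × ℤ)), ↑F ⊆ Loops r B →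
      (∀ w ∈ F, w.length ≤ k) → ∑ w ∈ F, rho w ≤ 3 := by
  classical
  have hdec : ∀ h, ∃ pq : List (ℤ × ℤ) × List (ℤ × ℤ),
      h ∈ Loops r B → pq.1 ++ pq.2 = h ∧ pq.1 ∈ Exc r B ∧ 1 ≤ pq.1.length ∧
        (pq.2 = [] ∨ pq.2 ∈ Loops r B) := by
    intro h
    by_cases hh : h ∈ Loops r B
    · obtain ⟨M, hM1, hMle, hE, hR, happ⟩ := Loops_decomp hh
      refine ⟨(h.take M, h.drop M), fun _ => ⟨happ, hE, ?_, hR⟩⟩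
      rw [List.length_take]; omega
    · exact ⟨([], []), fun hc => absurd hc hh⟩
  choose φ hφ using hdec
  intro k
  induction k with
  | zero =>
      intro F hF hlen
      have : F = ∅ := by
        apply Finset.eq_empty_of_forall_notMem
        intro w hw
        have h1 : w ≠ [] := (hF hw).1
        have h2 : w.length ≤ 0 := hlen w hw
        exact h1 (List.length_eq_zero_iff.1 (by omega))
      rw [this, Finset.sum_empty]
      exact zero_le
  | succ k ih =>
      intro F hF hlen
      have hprop : ∀ h ∈ F, (φ h).1 ++ (φ h).2 = h ∧ (φ h).1 ∈ Exc r B ∧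
          1 ≤ (φ h).1.length ∧ ((φ h).2 = [] ∨ (φ h).2 ∈ Loops r B) :=
        fun h hh => hφ h (hF hh)
      have hinj : Set.InjOn φ ↑F := by
        intro h1 h1m h2 h2m he
        rw [← (hprop h1 h1m).1, ← (hprop h2 h2m).1, he]
      have hstep1 : ∑ w ∈ F, rho w = ∑ p ∈ F.image φ, rho p.1 * rho p.2 := by
        rw [Finset.sum_image (fun x hx y hy => hinj hx hy)]
        exact Finset.sum_congr rfl fun w hw => by
          rw [← rho_append, (hprop w hw).1]
      have hsub : F.image φ ⊆ (F.image fun h => (φ h).1) ×ˢ (F.image fun h => (φ h).2) := by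
        intro p hp
        obtain ⟨h, hh, hph⟩ := Finset.mem_image.1 hp
        rw [Finset.mem_product, ← hph]
        exact ⟨Finset.mem_image_of_mem _ hh, Finset.mem_image_of_mem _ hh⟩
      have hstep2 : ∑ p ∈ F.image φ, rho p.1 * rho p.2 ≤
          (∑ x ∈ F.image fun h => (φ h).1, rho x) * ∑ y ∈ F.image fun h => (φ h).2, rho y := by
        rw [Finset.sum_mul_sum]
        calc ∑ p ∈ F.image φ, rho p.1 * rho p.2
            ≤ ∑ p ∈ (F.image fun h => (φ h).1) ×ˢ (F.image fun h => (φ h).2),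
              rho p.1 * rho p.2 := Finset.sum_le_sum_of_subset hsub
          _ = _ := by rw [Finset.sum_product]
      have hE : (∑ x ∈ F.image fun h => (φ h).1, rho x) ≤ 3 * 4⁻¹ := by
        refine le_trans ?_ hExc
        rw [wt]
        have : ∀ x ∈ (F.image fun h => (φ h).1), rho x = (Exc r B).indicator rho x := by
          intro x hx
          obtain ⟨h, hh, hxh⟩ := Finset.mem_image.1 hx
          rw [Set.indicator_of_mem (hxh ▸ (hprop h hh).2.1)]
        rw [Finset.sum_congr rfl this]
        exact ENNReal.sum_le_tsum _
      have hR : (∑ y ∈ F.image fun h => (φ h).2, rho y) ≤ 1 + 3 := by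
        have hsub2 : (F.image fun h => (φ h).2) ⊆
            insert [] (((F.image fun h => (φ h).2)).erase []) := by
          intro y hy
          by_cases hynil : y = []
          · rw [hynil]; exact Finset.mem_insert_self _ _
          · exact Finset.mem_insert_of_mem (Finset.mem_erase.2 ⟨hynil, hy⟩)
        calc (∑ y ∈ F.image fun h => (φ h).2, rho y)
            ≤ ∑ y ∈ insert [] (((F.image fun h => (φ h).2)).erase []), rho y :=
              Finset.sum_le_sum_of_subset hsub2
          _ = rho [] + ∑ y ∈ ((F.image fun h => (φ h).2)).erase [], rho y := by
              rw [Finset.sum_insert (Finset.notMem_erase _ _)]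
          _ ≤ 1 + 3 := by
              rw [rho_nil]
              refine add_le_add_right ?_ 1
              apply ih
              · intro y hy
                have hyne := (Finset.mem_erase.1 hy).1
                obtain ⟨h, hh, hyh⟩ := Finset.mem_image.1 (Finset.mem_erase.1 hy).2
                rcases (hprop h hh).2.2.2 with hnil | hloop
                · exact absurd (hyh ▸ hnil : y = []) hyne
                · exact hyh ▸ hloop
              · intro y hy
                obtain ⟨h, hh, hyh⟩ := Finset.mem_image.1 (Finset.mem_erase.1 hy).2
                have h1 := (hprop h hh).2.2.1
                have h2 := congrArg List.length (hprop h hh).1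
                rw [List.length_append] at h2
                have h3 := hlen h hh
                rw [← hyh]
                omega
      calc ∑ w ∈ F, rho w ≤ (3 * 4⁻¹) * (1 + 3) := by
            rw [hstep1]
            exact le_trans hstep2 (mul_le_mul' hE hR)
        _ = 3 := by
            rw [show (1 : ℝ≥0∞) + 3 = 4 from by norm_num, mul_assoc,
              ENNReal.inv_mul_cancel (by norm_num) (by norm_num), mul_one]

lemma wt_Loops_le {r : ℝ} {B : Set (ℤ × ℤ)} (hExc : wt (Exc r B) ≤ 3 * 4⁻¹) :
    wt (Loops r B) ≤ 3 := by
  classical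
  rw [wt, ENNReal.tsum_eq_iSup_sum]
  refine iSup_le fun F => ?_
  have heq : ∑ w ∈ F, (Loops r B).indicator rho w
      = ∑ w ∈ F.filter (· ∈ Loops r B), rho w := by
    rw [Finset.sum_filter]
    exact Finset.sum_congr rfl fun w _ => by simp [Set.indicator_apply]
  rw [heq]
  exact sum_loops_le hExc ((F.filter (· ∈ Loops r B)).sup List.length) _
    (fun w hw => (Finset.mem_filter.1 hw).2)
    (fun w hw => Finset.le_sup hw)

lemma wt_EWvisit_le {r : ℝ} (hr : 1 ≤ r) (B : Set (ℤ × ℤ)) :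
    wt (EWvisit r B) ≤ wt (Loops r B) * wt (EW r (B ∪ {0})) := by
  rw [wt_eq_tsum_subtype, wt_eq_tsum_subtype, wt_eq_tsum_subtype]
  have hdec : ∀ w : ↥(EWvisit r B), ∃ pq : ↥(Loops r B) × ↥(EW r (B ∪ {0})),
      (pq.1 : List (ℤ × ℤ)) ++ (pq.2 : List (ℤ × ℤ)) = (w : List (ℤ × ℤ)) := by
    intro w
    obtain ⟨L, _, _, h1, h2, h3⟩ := EWvisit_decomp hr w.2
    exact ⟨(⟨_, h1⟩, ⟨_, h2⟩), h3⟩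
  choose φ hφ using hdec
  have hinj : Function.Injective φ := by
    intro w1 w2 h
    apply Subtype.ext
    rw [← hφ w1, ← hφ w2, h]
  calc ∑' w : ↥(EWvisit r B), rho ↑w
      = ∑' w : ↥(EWvisit r B), (fun pq : ↥(Loops r B) × ↥(EW r (B ∪ {0})) =>
          rho ↑pq.1 * rho ↑pq.2) (φ w) :=
        tsum_congr fun w => by
          show rho ↑w = rho ↑(φ w).1 * rho ↑(φ w).2
          rw [← rho_append, hφ w]
    _ ≤ ∑' pq : ↥(Loops r B) × ↥(EW r (B ∪ {0})), rho ↑pq.1 * rho ↑pq.2 :=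
        ENNReal.tsum_comp_le_tsum_of_injective hinj _
    _ = (∑' h : ↥(Loops r B), rho ↑h) * ∑' t : ↥(EW r (B ∪ {0})), rho ↑t := by
        rw [ENNReal.tsum_prod (f := fun (h : ↥(Loops r B)) (t : ↥(EW r (B ∪ {0}))) =>
          rho ↑h * rho ↑t)]
        simp_rw [ENNReal.tsum_mul_left, ENNReal.tsum_mul_right]


end Esc

/-- **Lemma 2.1.** If `A ⊆ ℤ²` contains at least one nearest neighbor of the origin, then
for all `n ≥ 1`, `Es_n(A ∖ {0}) ≤ 4 Es_n(A)`. -/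
theorem escProb_remove_origin_le :
    ∀ (Ω : Type) [MeasurableSpace Ω], ∀ (P : Measure Ω) (S : ℕ → Ω → ℤ × ℤ),
      IsSRW P S → ∀ A : Set (ℤ × ℤ), (∃ a ∈ A, latNorm a = 1) → ∀ n : ℕ, 1 ≤ n →
        escProb P S n (A \ {0}) ≤ 4 * escProb P S n A := by
  intro Ω _ P S hS A hA n hn
  obtain ⟨a, haA, ha⟩ := hA
  set r : ℝ := (n : ℝ) with hrdef
  have hr : (1 : ℝ) ≤ r := by rw [hrdef]; exact_mod_cast hn
  set B : Set (ℤ × ℤ) := A \ {0} with hBdef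
  have haB : a ∈ B := ⟨haA, by simpa using Esc.latNorm_one_ne_zero ha⟩
  have hExc : Esc.wt (Esc.Exc r B) ≤ 3 * 4⁻¹ := Esc.wt_Exc_le hS haB ha
  have hLoops : Esc.wt (Esc.Loops r B) ≤ 3 := Esc.wt_Loops_le hExc
  have hsub : A ⊆ B ∪ {0} := by
    intro x hx
    by_cases h : x = 0
    · exact Or.inr h
    · exact Or.inl ⟨hx, h⟩
  have key : Esc.wt (Esc.EW r B) ≤ 4 * Esc.wt (Esc.EW r A) := by
    calc Esc.wt (Esc.EW r B)
        ≤ Esc.wt (Esc.EW r (B ∪ {0}) ∪ Esc.EWvisit r B) := Esc.wt_mono (Esc.EW_split r B)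
      _ ≤ Esc.wt (Esc.EW r (B ∪ {0})) + Esc.wt (Esc.EWvisit r B) := Esc.wt_union_le _ _
      _ ≤ Esc.wt (Esc.EW r (B ∪ {0})) + Esc.wt (Esc.Loops r B) * Esc.wt (Esc.EW r (B ∪ {0})) :=
          add_le_add_right (Esc.wt_EWvisit_le hr B) _
      _ ≤ Esc.wt (Esc.EW r (B ∪ {0})) + 3 * Esc.wt (Esc.EW r (B ∪ {0})) :=
          add_le_add_right (mul_le_mul_left hLoops _) _
      _ = 4 * Esc.wt (Esc.EW r (B ∪ {0})) := by ring
      _ ≤ 4 * Esc.wt (Esc.EW r A) := mul_le_mul_right (Esc.wt_mono (Esc.EW_mono hsub)) 4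
  rw [Esc.escProb_eq hS hr B, Esc.escProb_eq hS hr A]
  calc P {ω | ∀ k, S k ω ∉ discBdry r} + Esc.wt (Esc.EW r B)
      ≤ P {ω | ∀ k, S k ω ∉ discBdry r} + 4 * Esc.wt (Esc.EW r A) := add_le_add_right key _
    _ ≤ 4 * (P {ω | ∀ k, S k ω ∉ discBdry r} + Esc.wt (Esc.EW r A)) := by
        rw [mul_add]
        exact add_le_add (le_mul_of_one_le_left zero_le (by norm_num)) le_rfl
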